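/- Define Z(k;t) := (1-k)·Li_k(t) + (log t)·Li_{k-1}(t) for k ∈ ℤ and 0 < t < 1. Then for every integer k ≤ 0 one has lim_{t→1⁻} Z(k;t) = (1-k)·ζ(k), where ζ(k) is the value of the analytically continued Riemann zeta function; e.g. for k = 0 the limit is -1/2. -/

import Mathlib

open Filter Set

noncomputable def bcoef (n : ℕ) : ℝ := (bernoulli n : ℝ) / (n.factorial)

lemma bcoef_rec {n : ℕ} (hn : n ≠ 0) :
    bcoef n = -∑ k ∈ Finset.range n, bcoef k / ((n + 1 - k).factorial : ℝ) := by
  have h := sum_bernoulli (n+1)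
  rw [if_neg (by omega), Finset.sum_range_succ, Nat.choose_succ_self_right] at h
  have h' : (∑ k ∈ Finset.range n, (((n+1).choose k : ℝ)) * (bernoulli k : ℝ))
      + ((n:ℝ)+1) * (bernoulli n : ℝ) = 0 := by
    have := congrArg (fun q : ℚ => (q : ℝ)) h
    push_cast at this
    convert this using 2
  have hS : (∑ k ∈ Finset.range n, (((n+1).choose k : ℝ)) * (bernoulli k : ℝ))
      = ((n+1).factorial : ℝ) * ∑ k ∈ Finset.range n, bcoef k / ((n+1-k).factorial : ℝ) := by
    rw [Finset.mul_sum]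
    apply Finset.sum_congr rfl
    intro k hk
    simp only [Finset.mem_range] at hk
    have h1 : (n+1).choose k * k.factorial * (n+1-k).factorial = (n+1).factorial :=
      Nat.choose_mul_factorial_mul_factorial (by omega)
    have h1' : (((n+1).choose k : ℝ)) * (k.factorial : ℝ) * ((n+1-k).factorial : ℝ)
        = ((n+1).factorial : ℝ) := by exact_mod_cast congrArg (Nat.cast (R := ℝ)) h1
    unfold bcoef
    have hk0 : (k.factorial : ℝ) ≠ 0 := Nat.cast_ne_zero.2 k.factorial_ne_zero
    have hk1 : ((n+1-k).factorial : ℝ) ≠ 0 := Nat.cast_ne_zero.2 (n+1-k).factorial_ne_zero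
    field_simp
    linear_combination (bernoulli k : ℝ) * h1'
  rw [hS] at h'
  have hnn : ((n+1).factorial : ℝ) = ((n:ℝ)+1) * (n.factorial : ℝ) := by
    rw [Nat.factorial_succ]; push_cast; ring
  have h0 : (n.factorial : ℝ) ≠ 0 := Nat.cast_ne_zero.2 n.factorial_ne_zero
  have h2 : ((n:ℝ)+1) ≠ 0 := by positivity
  rw [hnn] at h'
  set S := ∑ k ∈ Finset.range n, bcoef k / ((n+1-k).factorial : ℝ) with hSdef
  have hb : (bernoulli n : ℝ) = -(n.factorial : ℝ) * S := by
    apply mul_left_cancel₀ h2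
    linear_combination h'
  rw [bcoef, hb]
  field_simp

lemma two_pow_le_factorial_succ (m : ℕ) : (2:ℝ) ^ m ≤ ((m+1).factorial : ℝ) := by
  induction m with
  | zero => norm_num
  | succ m ih =>
    rw [pow_succ]
    calc (2:ℝ)^m * 2 ≤ ((m+1).factorial : ℝ) * (((m+2 : ℕ)) : ℝ) := by
          apply mul_le_mul ih (by exact_mod_cast by omega) (by norm_num) (by positivity)
      _ = ((m+2).factorial : ℝ) := by
          rw [show (m+2) = (m+1)+1 from rfl, Nat.factorial_succ (m+1)]; push_cast; ring

lemma abs_bcoef_le (n : ℕ) : |bcoef n| ≤ 2 ^ n := by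
  induction n using Nat.strong_induction_on with
  | _ n ih =>
    rcases eq_or_ne n 0 with rfl | hn
    · simp [bcoef, bernoulli]
    · rw [bcoef_rec hn, abs_neg]
      calc |∑ k ∈ Finset.range n, bcoef k / ((n + 1 - k).factorial : ℝ)|
          ≤ ∑ k ∈ Finset.range n, |bcoef k / ((n + 1 - k).factorial : ℝ)| :=
            Finset.abs_sum_le_sum_abs _ _
        _ ≤ ∑ k ∈ Finset.range n, (2:ℝ)^k / 2^(n-k) := by
            apply Finset.sum_le_sum
            intro k hk
            simp only [Finset.mem_range] at hk
            rw [abs_div, abs_of_nonneg (by positivity : (0:ℝ) ≤ ((n+1-k).factorial : ℝ))]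
            apply div_le_div₀ (by positivity) (ih k hk) (by positivity)
            have : n + 1 - k = (n - k) + 1 := by omega
            rw [this]
            exact two_pow_le_factorial_succ (n-k)
        _ ≤ 2 ^ n := by
            have : ∀ k ∈ Finset.range n, (2:ℝ)^k / 2^(n-k) = (4:ℝ)^k / 2^n := by
              intro k hk
              simp only [Finset.mem_range] at hk
              rw [div_eq_div_iff (by positivity) (by positivity)]
              rw [show (4:ℝ) = 2^2 by norm_num, ← pow_mul, ← pow_add, ← pow_add]
              congr 1
              omega
            rw [Finset.sum_congr rfl this, ← Finset.sum_div]
            rw [div_le_iff₀ (by positivity)]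
            have hg : ∑ k ∈ Finset.range n, (4:ℝ)^k = ((4:ℝ)^n - 1)/(4-1) := by
              rw [geom_sum_eq (by norm_num)]
            rw [hg]
            have : (4:ℝ)^n = 2^n * 2^n := by
              rw [← mul_pow]; norm_num
            nlinarith [pow_pos (show (0:ℝ) < 2 by norm_num) n]

noncomputable def G : ℝ → ℝ := fun u => ∑' n : ℕ, bcoef n * u ^ n

lemma summable_G {u : ℝ} (h : |u| < 1/2) : Summable (fun n : ℕ => bcoef n * u ^ n) := by
  apply Summable.of_norm_bounded (g := fun n => (2*|u|)^n)
  · exact summable_geometric_of_lt_one (by positivity) (by linarith)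
  · intro n
    rw [norm_mul, mul_pow, norm_pow, Real.norm_eq_abs, Real.norm_eq_abs]
    exact mul_le_mul_of_nonneg_right (abs_bcoef_le n) (by positivity)

lemma hasG : HasFPowerSeriesOnBall G (FormalMultilinearSeries.ofScalars ℝ bcoef) 0 (1/4) where
  r_le := by
    have : ((1/4 : NNReal) : ENNReal) = 1/4 := by norm_num
    rw [← this]
    apply FormalMultilinearSeries.le_radius_of_bound _ 1
    intro n
    have hcoe : ((1/4 : NNReal) : ℝ) = 1/4 := by norm_num
    rw [FormalMultilinearSeries.ofScalars_norm, Real.norm_eq_abs, hcoe]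
    calc |bcoef n| * (1/4:ℝ)^n ≤ 2^n * (1/4)^n :=
          mul_le_mul_of_nonneg_right (abs_bcoef_le n) (by positivity)
      _ = (1/2:ℝ)^n := by rw [← mul_pow]; norm_num
      _ ≤ 1 := pow_le_one₀ (by norm_num) (by norm_num)
  r_pos := by norm_num
  hasSum := by
    intro y hy
    have hy' : |y| < 1/4 := by
      rw [EMetric.mem_ball, edist_dist] at hy
      have h2 : dist y 0 < ((1/4 : ENNReal)).toReal :=
        (ENNReal.ofReal_lt_iff_lt_toReal dist_nonneg (by norm_num)).1 hy
      have h4 : ((1/4 : ENNReal)).toReal = 1/4 := by norm_num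
      rw [h4, Real.dist_eq, sub_zero] at h2
      exact h2
    have hs : Summable (fun n : ℕ => bcoef n * y ^ n) := summable_G (by linarith)
    have : G (0 + y) = ∑' n : ℕ, bcoef n * y ^ n := by simp [G]
    rw [this]
    have hfun : (fun n : ℕ => FormalMultilinearSeries.ofScalars ℝ bcoef n fun _ => y)
        = fun n : ℕ => bcoef n * y^n := by
      funext n
      rw [FormalMultilinearSeries.ofScalars_apply_eq, smul_eq_mul]
    rw [hfun]
    exact hs.hasSum

lemma iteratedDeriv_G_zero (n : ℕ) : iteratedDeriv n G 0 = (bernoulli n : ℝ) := by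
  have h := hasG.factorial_smul (1 : ℝ) n
  rw [iteratedDeriv_eq_iteratedFDeriv]
  rw [← h, FormalMultilinearSeries.ofScalars_apply_eq, smul_eq_mul, one_pow, mul_one,
    nsmul_eq_mul, bcoef]
  field_simp

lemma analytic_iter_deriv_G (n : ℕ) :
    AnalyticOnNhd ℝ (deriv^[n] G) (EMetric.ball (0:ℝ) (1/4)) := by
  induction n with
  | zero => exact hasG.analyticOnNhd
  | succ n ih =>
    rw [Function.iterate_succ_apply']
    exact ih.deriv

lemma contAt_iteratedDeriv_G (n : ℕ) : ContinuousAt (iteratedDeriv n G) 0 := by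
  rw [iteratedDeriv_eq_iterate]
  exact ((analytic_iter_deriv_G n) 0 (Metric.mem_eball_self (by norm_num))).continuousAt

lemma Kcoef (n : ℕ) :
    ∑ p ∈ Finset.range (n+1), bcoef p / (((n - p) + 1).factorial : ℝ)
      = if n = 0 then 1 else 0 := by
  rcases eq_or_ne n 0 with rfl | hn
  · simp [bcoef, bernoulli]
  · rw [if_neg hn]
    have h := sum_bernoulli (n+1)
    rw [if_neg (by omega)] at h
    have h' : (∑ k ∈ Finset.range (n+1), (((n+1).choose k : ℝ)) * (bernoulli k : ℝ)) = 0 := by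
      have := congrArg (fun q : ℚ => (q : ℝ)) h
      push_cast at this
      convert this using 2
    have hS : (∑ k ∈ Finset.range (n+1), (((n+1).choose k : ℝ)) * (bernoulli k : ℝ))
        = ((n+1).factorial : ℝ) * ∑ p ∈ Finset.range (n+1), bcoef p / (((n-p)+1).factorial : ℝ) := by
      rw [Finset.mul_sum]
      apply Finset.sum_congr rfl
      intro k hk
      simp only [Finset.mem_range] at hk
      have hkn : k ≤ n := by omega
      have h1 : (n+1).choose k * k.factorial * (n+1-k).factorial = (n+1).factorial :=
        Nat.choose_mul_factorial_mul_factorial (by omega)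
      have he : n + 1 - k = (n - k) + 1 := by omega
      rw [he] at h1
      have h1' : (((n+1).choose k : ℝ)) * (k.factorial : ℝ) * (((n-k)+1).factorial : ℝ)
          = ((n+1).factorial : ℝ) := by exact_mod_cast congrArg (Nat.cast (R := ℝ)) h1
      unfold bcoef
      have hk0 : (k.factorial : ℝ) ≠ 0 := Nat.cast_ne_zero.2 k.factorial_ne_zero
      have hk1 : (((n-k)+1).factorial : ℝ) ≠ 0 := Nat.cast_ne_zero.2 ((n-k)+1).factorial_ne_zero
      field_simp
      linear_combination (bernoulli k : ℝ) * h1'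
    rw [hS] at h'
    have h0 : ((n+1).factorial : ℝ) ≠ 0 := Nat.cast_ne_zero.2 (n+1).factorial_ne_zero
    exact (mul_eq_zero.1 h').resolve_left h0

lemma exp_sub_one_eq (u : ℝ) :
    Real.exp u - 1 = ∑' n : ℕ, u^(n+1)/(((n+1).factorial : ℝ)) := by
  have hsum : Summable (fun n : ℕ => u^n/(n.factorial : ℝ)) := Real.summable_pow_div_factorial u
  have hexp : Real.exp u = ∑' n : ℕ, u^n/(n.factorial : ℝ) := by
    rw [Real.exp_eq_exp_ℝ, NormedSpace.exp_eq_tsum_div]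
  rw [hexp, Summable.tsum_eq_zero_add hsum]
  simp

lemma G_mul_exp {u : ℝ} (hu : |u| < 1/2) : G u * (Real.exp u - 1) = u := by
  have hf : Summable fun n : ℕ => ‖bcoef n * u^n‖ := by
    apply Summable.of_nonneg_of_le (fun n => norm_nonneg _) (fun n => ?_)
      (summable_geometric_of_lt_one (r := 2*|u|) (by positivity) (by linarith))
    rw [norm_mul, mul_pow, norm_pow, Real.norm_eq_abs, Real.norm_eq_abs]
    exact mul_le_mul_of_nonneg_right (abs_bcoef_le n) (by positivity)
  have hg : Summable fun n : ℕ => ‖u^(n+1)/(((n+1).factorial : ℝ))‖ := by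
    have h1 : Summable (fun n : ℕ => |u|^n/(n.factorial : ℝ)) := by
      have := Real.summable_pow_div_factorial |u|
      exact this
    have h2 := (summable_nat_add_iff (f := fun n : ℕ => |u|^n/(n.factorial : ℝ)) 1).2 h1
    apply h2.congr
    intro n
    rw [norm_div, Real.norm_eq_abs, Real.norm_eq_abs, abs_pow,
      abs_of_nonneg (by positivity : (0:ℝ) ≤ (((n+1).factorial : ℝ)))]
  have hG : G u = ∑' n : ℕ, bcoef n * u^n := rfl
  rw [hG, exp_sub_one_eq u,
    tsum_mul_tsum_eq_tsum_sum_antidiagonal_of_summable_norm hf hg]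
  have hinner : ∀ n : ℕ, (∑ kl ∈ Finset.HasAntidiagonal.antidiagonal n,
      (bcoef kl.1 * u^kl.1) * (u^(kl.2+1)/((kl.2+1).factorial : ℝ)))
      = if n = 0 then u else 0 := by
    intro n
    rw [Finset.Nat.sum_antidiagonal_eq_sum_range_succ_mk]
    have : ∀ p ∈ Finset.range (n+1),
        (bcoef p * u^p) * (u^((n-p)+1)/(((n-p)+1).factorial : ℝ))
        = u^(n+1) * (bcoef p / (((n-p)+1).factorial : ℝ)) := by
      intro p hp
      simp only [Finset.mem_range] at hp
      have : u^p * u^((n-p)+1) = u^(n+1) := by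
        rw [← pow_add]
        congr 1
        omega
      field_simp
      linear_combination bcoef p * this
    rw [Finset.sum_congr rfl this, ← Finset.mul_sum, Kcoef n]
    rcases eq_or_ne n 0 with rfl | hn
    · simp
    · simp [hn]
  rw [tsum_congr hinner]
  exact tsum_ite_eq 0 (fun _ => u)

lemma G_eq_Ioo {u : ℝ} (hu : u ∈ Ioo (0:ℝ) (1/2)) :
    G u = u * (Real.exp u - 1)⁻¹ := by
  have h1 : (1:ℝ) < Real.exp u := by
    rw [← Real.exp_zero]
    exact Real.exp_lt_exp.2 hu.1
  have h2 : Real.exp u - 1 ≠ 0 := by linarith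
  have h3 := G_mul_exp (u := u) (by rw [abs_of_pos hu.1]; exact hu.2)
  field_simp
  linarith [h3]

noncomputable def Ee (m : ℕ) (u : ℝ) : ℝ :=
  ∑' n : ℕ, ((n:ℝ)+1)^m * Real.exp (-(((n:ℝ)+1) * u))

lemma exp_term_eq (m : ℕ) (u : ℝ) (n : ℕ) :
    ((n:ℝ)+1)^m * Real.exp (-(((n:ℝ)+1) * u))
      = (((n+1 : ℕ)):ℝ)^m * (Real.exp (-u))^(n+1) := by
  rw [← Real.exp_nat_mul]
  push_cast
  ring_nf


lemma summable_Ee (m : ℕ) {u : ℝ} (hu : 0 < u) :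
    Summable (fun n : ℕ => ((n:ℝ)+1)^m * Real.exp (-(((n:ℝ)+1) * u))) := by
  have hr : ‖Real.exp (-u)‖ < 1 := by
    rw [Real.norm_eq_abs, abs_of_pos (Real.exp_pos _)]
    exact Real.exp_lt_one_iff.2 (by linarith)
  have h1 := summable_pow_mul_geometric_of_norm_lt_one (R := ℝ) m hr
  have h2 := (summable_nat_add_iff (f := fun n : ℕ => (n:ℝ)^m * (Real.exp (-u))^n) 1).2 h1
  apply h2.congr
  intro n
  rw [exp_term_eq]


lemma Ee_zero {u : ℝ} (hu : 0 < u) : Ee 0 u = (Real.exp u - 1)⁻¹ := by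
  have hr0 : 0 < Real.exp (-u) := Real.exp_pos _
  have hr1 : Real.exp (-u) < 1 := Real.exp_lt_one_iff.2 (by linarith)
  have h1 : Ee 0 u = ∑' n : ℕ, Real.exp (-u) * (Real.exp (-u))^n := by
    apply tsum_congr
    intro n
    rw [exp_term_eq]
    simp [pow_succ']
  rw [h1, tsum_mul_left, tsum_geometric_of_lt_one (le_of_lt hr0) hr1]
  have h2 : (1:ℝ) < Real.exp u := by
    rw [← Real.exp_zero]; exact Real.exp_lt_exp.2 hu
  rw [Real.exp_neg]
  have hx : Real.exp u ≠ 0 := (Real.exp_pos u).ne'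
  field_simp

lemma hasDerivAt_Ee (m : ℕ) {u : ℝ} (hu : 0 < u) :
    HasDerivAt (Ee m) (-Ee (m+1) u) u := by
  have key := hasDerivAt_tsum_of_isPreconnected
    (u := fun n : ℕ => ((n:ℝ)+1)^(m+1) * Real.exp (-(((n:ℝ)+1) * (u/2))))
    (g := fun (n : ℕ) (y : ℝ) => ((n:ℝ)+1)^m * Real.exp (-(((n:ℝ)+1) * y)))
    (g' := fun (n : ℕ) (y : ℝ) => -(((n:ℝ)+1)^(m+1) * Real.exp (-(((n:ℝ)+1) * y))))
    (summable_Ee (m+1) (by linarith : (0:ℝ) < u/2)) isOpen_Ioi isPreconnected_Ioi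
    (fun n y hy => ?_) (fun n y hy => ?_)
    (mem_Ioi.2 (by linarith : u/2 < u)) (summable_Ee m hu) (mem_Ioi.2 (by linarith : u/2 < u))
  · have : -Ee (m+1) u = ∑' n : ℕ, -(((n:ℝ)+1)^(m+1) * Real.exp (-(((n:ℝ)+1) * u))) := by
      rw [Ee, ← tsum_neg]
    rw [this]
    exact key
  · -- HasDerivAt of each term
    have h1 : HasDerivAt (fun y : ℝ => -(((n:ℝ)+1) * y)) (-((n:ℝ)+1)) y := by
      simpa using ((hasDerivAt_id y).const_mul (((n:ℝ)+1))).fun_neg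
    have h2 := (h1.exp).const_mul (((n:ℝ)+1)^m)
    convert h2 using 1
    show -(((n:ℝ)+1)^(m+1) * Real.exp (-(((n:ℝ)+1) * y))) = _
    rw [pow_succ]
    ring
    rfl
  · -- bound
    rw [norm_neg, norm_mul, Real.norm_eq_abs, Real.norm_eq_abs,
      abs_of_nonneg (by positivity : (0:ℝ) ≤ ((n:ℝ)+1)^(m+1)),
      abs_of_pos (Real.exp_pos _)]
    apply mul_le_mul_of_nonneg_left _ (by positivity)
    apply Real.exp_le_exp.2
    rw [mem_Ioi] at hy
    nlinarith [Nat.cast_nonneg (α := ℝ) n]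

lemma iteratedDeriv_G_Ioo : ∀ (n : ℕ), ∀ u ∈ Ioo (0:ℝ) (1/2),
    iteratedDeriv (n+1) G u
      = (-1:ℝ)^n * (((n:ℝ)+1) * Ee n u - u * Ee (n+1) u) := by
  intro n
  induction n with
  | zero =>
    intro u hu
    have hmem : Ioo (0:ℝ) (1/2) ∈ nhds u := isOpen_Ioo.mem_nhds hu
    rw [iteratedDeriv_one]
    have hev : G =ᶠ[nhds u] fun v => v * Ee 0 v := by
      filter_upwards [hmem] with v hv
      rw [G_eq_Ioo hv, Ee_zero hv.1]
    rw [hev.deriv_eq]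
    have hd : HasDerivAt (fun v => v * Ee 0 v) (1 * Ee 0 u + u * (-Ee 1 u)) u :=
      (hasDerivAt_id u).mul (hasDerivAt_Ee 0 hu.1)
    rw [hd.deriv]
    push_cast
    ring
  | succ n ih =>
    intro u hu
    have hmem : Ioo (0:ℝ) (1/2) ∈ nhds u := isOpen_Ioo.mem_nhds hu
    rw [iteratedDeriv_succ]
    have hev : iteratedDeriv (n+1) G
        =ᶠ[nhds u] fun v => (-1:ℝ)^n * (((n:ℝ)+1) * Ee n v - v * Ee (n+1) v) := by
      filter_upwards [hmem] with v hv
      exact ih v hv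
    rw [hev.deriv_eq]
    have hd : HasDerivAt (fun v => (-1:ℝ)^n * (((n:ℝ)+1) * Ee n v - v * Ee (n+1) v))
        ((-1:ℝ)^n * ((((n:ℝ)+1) * (-Ee (n+1) u)) - (1 * Ee (n+1) u + u * (-Ee (n+2) u)))) u :=
      (((hasDerivAt_Ee n hu.1).const_mul (((n:ℝ)+1))).sub
        ((hasDerivAt_id u).mul (hasDerivAt_Ee (n+1) hu.1))).const_mul ((-1:ℝ)^n)
    rw [hd.deriv]
    push_cast
    ring

/-- The polylogarithm `Li_k(t) = ∑_{n≥1} tⁿ/n^k`, `k ∈ ℤ`. -/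
noncomputable def Li (k : ℤ) (t : ℝ) : ℝ := ∑' n : ℕ, t ^ (n + 1) / ((n : ℝ) + 1) ^ k

/-- The depth-1 combination `Z(k;t) = (1-k) Li_k(t) + (log t) Li_{k-1}(t)`. -/
noncomputable def Zdes (k : ℤ) (t : ℝ) : ℝ := (1 - (k : ℝ)) * Li k t + Real.log t * Li (k - 1) t

lemma Li_eq_Ee (m : ℕ) {t : ℝ} (ht : t ∈ Ioo (0:ℝ) 1) :
    Li (-(m:ℤ)) t = Ee m (-Real.log t) := by
  apply tsum_congr
  intro n
  rw [zpow_neg, zpow_natCast, division_def, inv_inv]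
  have h1 : -(((n:ℝ)+1) * -Real.log t) = ((n+1 : ℕ) : ℝ) * Real.log t := by push_cast; ring
  rw [h1, Real.exp_nat_mul, Real.exp_log ht.1]
  ring

/-- For every integer `k ≤ 0`, `lim_{t→1⁻} Z(k;t) = (1-k)·ζ(k)` (value of the
analytically continued Riemann zeta function). -/
theorem tendsto_Zdes_nonpos (k : ℤ) (hk : k ≤ 0) :
    Tendsto (fun t : ℝ => ((Zdes k t : ℝ) : ℂ))
      (nhdsWithin 1 (Set.Ioo 0 1)) (nhds ((1 - (k : ℂ)) * riemannZeta k)) := by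
  set m : ℕ := (-k).toNat with hmdef
  have hm : k = -(m:ℤ) := by omega
  -- eventual identification of Zdes with the derivative of G
  have hev : ∀ᶠ t in nhdsWithin 1 (Set.Ioo 0 1),
      Zdes k t = (-1:ℝ)^m * iteratedDeriv (m+1) G (-Real.log t) := by
    have hU : Ioo (Real.exp (-(1/2))) 2 ∈ nhds (1:ℝ) := by
      apply isOpen_Ioo.mem_nhds
      constructor
      · exact Real.exp_lt_one_iff.2 (by norm_num)
      · norm_num
    filter_upwards [mem_nhdsWithin_of_mem_nhds hU, self_mem_nhdsWithin] with t htU ht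
    have hu : -Real.log t ∈ Ioo (0:ℝ) (1/2) := by
      constructor
      · simpa using Real.log_neg ht.1 ht.2
      · have h5 : Real.exp (-(1/2)) < Real.exp (Real.log t) := by
          rw [Real.exp_log ht.1]; exact htU.1
        have := Real.exp_lt_exp.1 h5
        linarith
    have h1 : Li k t = Ee m (-Real.log t) := by rw [hm]; exact Li_eq_Ee m ht
    have h2 : Li (k-1) t = Ee (m+1) (-Real.log t) := by
      have : k - 1 = -((m+1 : ℕ) : ℤ) := by rw [hm]; push_cast; ring
      rw [this]
      exact Li_eq_Ee (m+1) ht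
    rw [Zdes, h1, h2, iteratedDeriv_G_Ioo m _ hu]
    have h3 : (1 : ℝ) - (k:ℝ) = (m:ℝ) + 1 := by
      rw [hm]; push_cast; ring
    rw [h3]
    have hsq : (-1:ℝ)^m * (-1:ℝ)^m = 1 := by
      rw [← pow_add, (neg_one_pow_eq_one_iff_even (by norm_num)).2 ⟨m, rfl⟩]
    rw [← mul_assoc, hsq, one_mul]
    ring
  -- the real limit
  have hlog : Tendsto (fun t : ℝ => -Real.log t) (nhdsWithin 1 (Set.Ioo 0 1)) (nhds 0) := by
    have hc : ContinuousAt (fun t : ℝ => -Real.log t) 1 :=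
      (Real.continuousAt_log one_ne_zero).neg
    have h0 := hc.tendsto.mono_left (nhdsWithin_le_nhds (s := Set.Ioo 0 1))
    simpa using h0
  have hreal : Tendsto (fun t : ℝ => (-1:ℝ)^m * iteratedDeriv (m+1) G (-Real.log t))
      (nhdsWithin 1 (Set.Ioo 0 1)) (nhds ((-1:ℝ)^m * (bernoulli (m+1) : ℝ))) := by
    have h1 := (contAt_iteratedDeriv_G (m+1)).tendsto.comp hlog
    rw [iteratedDeriv_G_zero] at h1
    exact h1.const_mul _
  have hreal' : Tendsto (fun t : ℝ => Zdes k t) (nhdsWithin 1 (Set.Ioo 0 1))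
      (nhds ((-1:ℝ)^m * (bernoulli (m+1) : ℝ))) :=
    Filter.Tendsto.congr' (Filter.EventuallyEq.symm (α := ℝ) (β := ℝ) hev) hreal
  have hC : Tendsto (fun t : ℝ => ((Zdes k t : ℝ) : ℂ)) (nhdsWithin 1 (Set.Ioo 0 1))
      (nhds ((((-1:ℝ)^m * (bernoulli (m+1) : ℝ) : ℝ)) : ℂ)) :=
    (Complex.continuous_ofReal.tendsto _).comp hreal'
  have hval : (1 - (k : ℂ)) * riemannZeta (k : ℂ)
      = ((((-1:ℝ)^m * (bernoulli (m+1) : ℝ) : ℝ)) : ℂ) := by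
    have hkC : ((k : ℤ) : ℂ) = -(m:ℂ) := by rw [hm]; push_cast; ring
    rw [hkC, riemannZeta_neg_nat_eq_bernoulli]
    push_cast
    have hne : ((m:ℂ) + 1) ≠ 0 := Nat.cast_add_one_ne_zero m
    field_simp
    ring
  rw [hval]
  exact hC
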